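/- Fix θ₀ ∈ ℝ, let d₁ < d₂ < ⋯ < d_l be the anti-Stokes directions in the half-period [θ₀, θ₀ + π/(k−1)), and let ≺ be the total order on {1, …, n} defined by i ≺ j iff (i,j) ∈ Roots(d_t) for some 1 ≤ t ≤ l. Then the product map Sto(d₁) × ⋯ × Sto(d_l) → GL_n(ℂ), (K₁, …, K_l) ↦ K_l·K_{l−1} ⋯ K₂·K₁, is injective, and its image is exactly {K ∈ GL_n(ℂ) : K_{ii} = 1 for all i, and K_{ij} = 0 whenever i ≠ j and not i ≺ j} — equivalently, the image is P·U₊·P⁻¹, where U₊ is the upper-triangular unipotent subgroup and P is the permutation matrix with P_{ij} = δ_{π(i),j} for the permutation π satisfying i ≺ j ⟺ π(i) < π(j). In particular every element of P·U₊·P⁻¹ factors uniquely as a product K_l ⋯ K₁ of Stokes factors K_t ∈ Sto(d_t). -/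

import Mathlib

/-- `(i,j)` is a root of the direction `θ`: `(uᵢ − uⱼ)·exp(−√−1(k−1)θ)` is a negative
real number. -/
def IsRoot {n : ℕ} (u : Fin n → ℂ) (k : ℕ) (i j : Fin n) (θ : ℝ) : Prop :=
  ∃ r : ℝ, r < 0 ∧ (u i - u j) * Complex.exp (-(Complex.I * ((k : ℂ) - 1) * (θ : ℂ))) = (r : ℂ)

/-- `θ` is an anti-Stokes direction: some ordered pair `(i,j)`, `i ≠ j`, is a root of `θ`. -/
def IsAntiStokes {n : ℕ} (u : Fin n → ℂ) (k : ℕ) (θ : ℝ) : Prop :=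
  ∃ i j : Fin n, i ≠ j ∧ IsRoot u k i j θ

/-- Membership in the group of Stokes factors `Sto(d)`: `K_{ij} = δ_{ij}` unless `(i,j)` is
a root of `d`. -/
def StoMem {n : ℕ} (u : Fin n → ℂ) (k : ℕ) (d : ℝ) (K : Matrix (Fin n) (Fin n) ℂ) : Prop :=
  (∀ i, K i i = 1) ∧ ∀ i j : Fin n, i ≠ j → ¬ IsRoot u k i j d → K i j = 0


open Complex
noncomputable def ce (x : ℝ) : ℂ := Complex.exp (x * Complex.I)
lemma ce_mul_ce (x y : ℝ) : ce x * ce y = ce (x + y) := by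
  unfold ce; rw [← Complex.exp_add]; push_cast; ring_nf
lemma ce_zero : ce 0 = 1 := by simp [ce]
lemma ce_ne_zero (x : ℝ) : ce x ≠ 0 := Complex.exp_ne_zero _
lemma ce_form (x : ℝ) : ce x = (Real.cos x : ℂ) + (Real.sin x : ℂ) * Complex.I := by
  unfold ce; rw [Complex.exp_mul_I]; push_cast [Complex.ofReal_cos, Complex.ofReal_sin]; ring

lemma core1 {r r' x : ℝ} (hr : r ≠ 0) (hx : |x| < Real.pi)
    (h : (r : ℂ) * ce x = (r' : ℂ)) : x = 0 ∧ r = r' := by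
  rw [ce_form] at h
  have him : r * Real.sin x = 0 := by
    have := congrArg Complex.im h
    simpa [Complex.sin_ofReal_re] using this
  have hsin : Real.sin x = 0 := by
    rcases mul_eq_zero.mp him with h0 | h0
    · exact absurd h0 hr
    · exact h0
  obtain ⟨h1, h2⟩ := abs_lt.mp hx
  have hx0 : x = 0 := (Real.sin_eq_zero_iff_of_lt_of_lt h1 h2).mp hsin
  subst hx0
  refine ⟨rfl, ?_⟩
  have := congrArg Complex.re h
  simpa using this

lemma root_core {c : ℝ} (hc : 0 < c) {z : ℂ} {r r' θ φ : ℝ}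
    (h1 : z = (r : ℂ) * ce (c * θ)) (h2 : z = (r' : ℂ) * ce (c * φ)) (hr : r ≠ 0)
    (hbd : |c * (θ - φ)| < Real.pi) : θ = φ ∧ r = r' := by
  have key : (r : ℂ) * ce (c * (θ - φ)) = (r' : ℂ) := by
    have e0 : (r : ℂ) * ce (c * θ) = (r' : ℂ) * ce (c * φ) := by rw [← h1, ← h2]
    have e1 : (r : ℂ) * (ce (c * θ) * ce (-(c * φ)))
        = (r' : ℂ) * (ce (c * φ) * ce (-(c * φ))) := by
      rw [← mul_assoc, ← mul_assoc, e0]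
    rw [ce_mul_ce, ce_mul_ce, show c * φ + -(c * φ) = 0 by ring, ce_zero, mul_one,
      show c * θ + -(c * φ) = c * (θ - φ) by ring] at e1
    exact e1
  obtain ⟨hx, hrr⟩ := core1 hr hbd key
  constructor
  · have : θ - φ = 0 := by
      rcases mul_eq_zero.mp hx with h | h
      · exact absurd h (ne_of_gt hc)
      · exact h
    linarith
  · exact hrr

/-- IVT step: composition of two roots at distinct directions. -/
lemma ivt_root {c : ℝ} (hc : 0 < c) {z1 z2 : ℂ} {r1 r2 θ φ : ℝ} (hr1 : r1 < 0) (hr2 : r2 < 0)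
    (h1 : z1 = (r1 : ℂ) * ce (c * θ)) (h2 : z2 = (r2 : ℂ) * ce (c * φ)) (hθφ : θ < φ)
    (hlt : φ - θ < Real.pi / c) :
    ∃ ψ, θ < ψ ∧ ψ < φ ∧ ∃ ρ : ℝ, ρ < 0 ∧ z1 + z2 = (ρ : ℂ) * ce (c * ψ) := by
  have hπ : 0 < c * (φ - θ) ∧ c * (φ - θ) < Real.pi := by
    constructor
    · exact mul_pos hc (by linarith)
    · calc c * (φ - θ) < c * (Real.pi / c) := by apply mul_lt_mul_of_pos_left hlt hc
        _ = Real.pi := by field_simp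
  set f : ℝ → ℝ := fun ψ => r1 * Real.sin (c * (θ - ψ)) + r2 * Real.sin (c * (φ - ψ)) with hf
  have hcont : ContinuousOn f (Set.Icc θ φ) := by
    apply Continuous.continuousOn; fun_prop
  have hsinpos : 0 < Real.sin (c * (φ - θ)) := Real.sin_pos_of_pos_of_lt_pi hπ.1 hπ.2
  have hfθ : f θ = r2 * Real.sin (c * (φ - θ)) := by simp [hf]
  have hfφ : f φ = -(r1 * Real.sin (c * (φ - θ))) := by
    simp only [hf]
    rw [show c * (θ - φ) = -(c * (φ - θ)) by ring, Real.sin_neg, show c * (φ - φ) = 0 by ring,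
      Real.sin_zero]
    ring
  have h0mem : (0 : ℝ) ∈ Set.Ioo (f θ) (f φ) := by
    constructor
    · rw [hfθ]; exact mul_neg_of_neg_of_pos hr2 hsinpos
    · rw [hfφ]; nlinarith
  obtain ⟨ψ, hψmem, hfψ⟩ := intermediate_value_Ioo (le_of_lt hθφ) hcont h0mem
  obtain ⟨hψ1, hψ2⟩ := hψmem
  refine ⟨ψ, hψ1, hψ2, ?_⟩
  set ξ₁ := c * (θ - ψ) with hξ₁
  set ξ₂ := c * (φ - ψ) with hξ₂
  have hs1 : Real.sin ξ₁ < 0 := by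
    apply Real.sin_neg_of_neg_of_neg_pi_lt
    · exact mul_neg_of_pos_of_neg hc (by linarith)
    · nlinarith [hπ.2]
  have hs2 : 0 < Real.sin ξ₂ := by
    apply Real.sin_pos_of_pos_of_lt_pi
    · exact mul_pos hc (by linarith)
    · nlinarith [hπ.2]
  have him0 : r1 * Real.sin ξ₁ + r2 * Real.sin ξ₂ = 0 := hfψ
  set ρ : ℝ := r1 * Real.cos ξ₁ + r2 * Real.cos ξ₂ with hρ
  have hsub : ξ₂ - ξ₁ = c * (φ - θ) := by rw [hξ₁, hξ₂]; ring
  have hvs : (-ρ) * (-Real.sin ξ₁) = (-r2) * Real.sin (ξ₂ - ξ₁) := by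
    rw [Real.sin_sub]
    linear_combination Real.cos ξ₁ * him0
  have hρneg : ρ < 0 := by
    rw [hsub] at hvs
    nlinarith [mul_pos (neg_pos.mpr hr2) hsinpos, hs1]
  refine ⟨ρ, hρneg, ?_⟩
  have key : (r1 : ℂ) * ce ξ₁ + (r2 : ℂ) * ce ξ₂ = (ρ : ℂ) := by
    rw [ce_form, ce_form]
    have e1 : ((r1 * Real.cos ξ₁ + r2 * Real.cos ξ₂ : ℝ) : ℂ) = (ρ : ℂ) := by rw [← hρ]
    have e2 : ((r1 * Real.sin ξ₁ + r2 * Real.sin ξ₂ : ℝ) : ℂ) = 0 := by rw [him0]; simp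
    calc (r1 : ℂ) * ((Real.cos ξ₁ : ℂ) + (Real.sin ξ₁ : ℂ) * Complex.I)
          + (r2 : ℂ) * ((Real.cos ξ₂ : ℂ) + (Real.sin ξ₂ : ℂ) * Complex.I)
        = ((r1 * Real.cos ξ₁ + r2 * Real.cos ξ₂ : ℝ) : ℂ)
          + ((r1 * Real.sin ξ₁ + r2 * Real.sin ξ₂ : ℝ) : ℂ) * Complex.I := by push_cast; ring
      _ = (ρ : ℂ) := by rw [e1, e2]; simp
  calc z1 + z2 = ((r1 : ℂ) * ce ξ₁ + (r2 : ℂ) * ce ξ₂) * ce (c * ψ) := by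
        rw [h1, h2, add_mul, mul_assoc, mul_assoc, ce_mul_ce, ce_mul_ce]
        rw [show ξ₁ + c * ψ = c * θ by rw [hξ₁]; ring, show ξ₂ + c * ψ = c * φ by rw [hξ₂]; ring]
    _ = (ρ : ℂ) * ce (c * ψ) := by rw [key]

def StoR {n : ℕ} (S : Fin n → Fin n → Prop) (K : Matrix (Fin n) (Fin n) ℂ) : Prop :=
  (∀ i, K i i = 1) ∧ ∀ i j : Fin n, i ≠ j → ¬ S i j → K i j = 0

lemma stoR_inv {n : ℕ} (S : Fin n → Fin n → Prop) (hirr : ∀ i, ¬ S i i)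
    (htr : ∀ i j m, S i j → S j m → S i m) (K : Matrix (Fin n) (Fin n) ℂ) (hK : StoR S K) :
    ∃ K', StoR S K' ∧ K * K' = 1 ∧ K' * K = 1 := by
  classical
  set f : Fin n → ℕ := fun i => (Finset.univ.filter (fun q => S q i)).card with hfdef
  have hmono : ∀ i j, S i j → f i < f j := by
    intro i j hij
    apply Finset.card_lt_card
    rw [Finset.ssubset_iff_of_subset]
    · exact ⟨i, by simp [hij], by simp [hirr i]⟩
    · intro q hq
      simp only [Finset.mem_filter, Finset.mem_univ, true_and] at hq ⊢
      exact htr _ _ _ hq hij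
  set E : Matrix (Fin n) (Fin n) ℂ := 1 - K with hEdef
  have hEsupp : ∀ i j, E i j ≠ 0 → S i j := by
    intro i j h
    by_cases hij : i = j
    · subst hij; simp [hEdef, hK.1 i, Matrix.one_apply_eq] at h
    · by_contra hS
      exact h (by simp [hEdef, Matrix.one_apply_ne hij, hK.2 i j hij hS])
  have hpow : ∀ m i j, (E ^ m) i j ≠ 0 → (m = 0 ∧ i = j) ∨ (S i j ∧ f i + m ≤ f j) := by
    intro m
    induction m with
    | zero =>
      intro i j h
      rw [pow_zero] at h
      left
      refine ⟨rfl, ?_⟩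
      by_contra hij
      exact h (Matrix.one_apply_ne hij)
    | succ m ih =>
      intro i j h
      rw [pow_succ, Matrix.mul_apply] at h
      obtain ⟨p, -, hp⟩ := Finset.exists_ne_zero_of_sum_ne_zero h
      have h1 : (E ^ m) i p ≠ 0 := fun h0 => hp (by simp [h0])
      have h2 : E p j ≠ 0 := fun h0 => hp (by simp [h0])
      have hSpj := hEsupp _ _ h2
      right
      rcases ih i p h1 with ⟨hm, rfl⟩ | ⟨hS, hle⟩
      · subst hm
        exact ⟨hSpj, by have := hmono _ _ hSpj; omega⟩
      · exact ⟨htr _ _ _ hS hSpj, by have := hmono _ _ hSpj; omega⟩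
  have hEn : E ^ n = 0 := by
    ext i j
    rw [Matrix.zero_apply]
    by_contra h
    rcases hpow n i j h with ⟨h0, -⟩ | ⟨-, hle⟩
    · have := i.pos; omega
    · have hfj : f j < n := by
        have hsub : (Finset.univ.filter (fun q => S q j)) ⊆ Finset.univ.erase j := by
          intro q hq
          simp only [Finset.mem_filter, Finset.mem_univ, true_and] at hq
          exact Finset.mem_erase.mpr ⟨fun h' => hirr j (h' ▸ hq), Finset.mem_univ q⟩
        calc f j ≤ (Finset.univ.erase j).card := Finset.card_le_card hsub
          _ < Finset.univ.card := Finset.card_erase_lt_of_mem (Finset.mem_univ j)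
          _ = n := by simp
      omega
  refine ⟨∑ m ∈ Finset.range n, E ^ m, ⟨?_, ?_⟩, ?_, ?_⟩
  · intro i
    rw [Matrix.sum_apply]
    rw [Finset.sum_eq_single_of_mem 0 (Finset.mem_range.mpr i.pos)]
    · simp
    · intro m _ hm
      by_contra h
      rcases hpow m i i h with ⟨h0, -⟩ | ⟨hS, -⟩
      · exact hm h0
      · exact hirr i hS
  · intro i j hij hS
    rw [Matrix.sum_apply]
    apply Finset.sum_eq_zero
    intro m _
    by_contra h
    rcases hpow m i j h with ⟨-, h0⟩ | ⟨hS', -⟩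
    · exact hij h0
    · exact hS hS'
  · have hg := mul_geom_sum E n
    rw [hEn] at hg
    rw [show E - 1 = -K by rw [hEdef]; abel] at hg
    have : -(K * ∑ m ∈ Finset.range n, E ^ m) = -1 := by rw [← neg_mul]; rw [hg]; abel
    exact neg_injective this
  · have hg := geom_sum_mul E n
    rw [hEn] at hg
    rw [show E - 1 = -K by rw [hEdef]; abel] at hg
    have : -((∑ m ∈ Finset.range n, E ^ m) * K) = -1 := by rw [← mul_neg]; rw [hg]; abel
    exact neg_injective this

lemma prod_ofFn_succ_rev {l : ℕ} {M : Type*} [Monoid M] (K : Fin (l + 1) → M) :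
    (List.ofFn K).reverse.prod = (List.ofFn (fun t : Fin l => K t.succ)).reverse.prod * K 0 := by
  rw [List.ofFn_succ]
  simp

lemma bjl {n : ℕ} (l : ℕ) (R : ℕ → Fin n → Fin n → Prop)
    (hdisj : ∀ t s i j, R t i j → R s i j → t = s)
    (hasym : ∀ t s i j, R t i j → R s j i → False)
    (hceq : ∀ t i j m, R t i j → R t j m → R t i m)
    (hcne : ∀ t s i j m, R t i j → R s j m → t ≠ s →
      ∃ r, R r i m ∧ min t s < r ∧ r < max t s) :
    (∀ K K' : Fin l → Matrix (Fin n) (Fin n) ℂ,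
      (∀ t : Fin l, StoR (R ↑t) (K t)) → (∀ t : Fin l, StoR (R ↑t) (K' t)) →
      (List.ofFn K).reverse.prod = (List.ofFn K').reverse.prod → K = K') ∧
    (∀ A : Matrix (Fin n) (Fin n) ℂ,
      (∃ K : Fin l → Matrix (Fin n) (Fin n) ℂ,
        (∀ t : Fin l, StoR (R ↑t) (K t)) ∧ (List.ofFn K).reverse.prod = A) ↔
      ((∀ i, A i i = 1) ∧ ∀ i j : Fin n, i ≠ j → ¬ (∃ t < l, R t i j) → A i j = 0)) := by
  classical
  induction l generalizing R with
  | zero =>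
    constructor
    · intro K K' _ _ _
      funext t
      exact t.elim0
    · intro A
      constructor
      · rintro ⟨K, -, rfl⟩
        simp only [List.ofFn_zero, List.reverse_nil, List.prod_nil]
        exact ⟨fun i => Matrix.one_apply_eq i, fun i j hij _ => Matrix.one_apply_ne hij⟩
      · rintro ⟨h1, h2⟩
        refine ⟨fun t => t.elim0, fun t => t.elim0, ?_⟩
        simp only [List.ofFn_zero, List.reverse_nil, List.prod_nil]
        ext i j
        by_cases hij : i = j
        · subst hij; rw [h1 i, Matrix.one_apply_eq]
        · rw [h2 i j hij (by rintro ⟨t, ht, -⟩; omega), Matrix.one_apply_ne hij]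
  | succ l ih =>
    have hne : ∀ t i j, R t i j → i ≠ j := by
      intro t i j h hij
      subst hij
      exact hasym t t i i h h
    have hirr0 : ∀ i, ¬ R 0 i i := fun i h => hne 0 i i h rfl
    have htr0 : ∀ i j m, R 0 i j → R 0 j m → R 0 i m := hceq 0
    -- shifted relation satisfies hypotheses
    obtain ⟨ihinj, ihim⟩ := ih (fun t => R (t + 1))
      (fun t s i j h1 h2 => by have := hdisj (t+1) (s+1) i j h1 h2; omega)
      (fun t s i j h1 h2 => hasym (t+1) (s+1) i j h1 h2)
      (fun t i j m h1 h2 => hceq (t+1) i j m h1 h2)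
      (by
        intro t s i j m h1 h2 hts
        obtain ⟨r, hr, hlo, hhi⟩ := hcne (t+1) (s+1) i j m h1 h2 (by omega)
        have hr1 : 1 ≤ r := by omega
        refine ⟨r - 1, ?_, by omega, by omega⟩
        show R (r - 1 + 1) i m
        rwa [show r - 1 + 1 = r by omega])
    -- forward step: multiplying a good B by a Stokes factor at direction 0
    have fwd : ∀ (B K0 : Matrix (Fin n) (Fin n) ℂ), StoR (R 0) K0 →
        ((∀ i, B i i = 1) ∧ ∀ i j : Fin n, i ≠ j → ¬ (∃ t < l, R (t+1) i j) → B i j = 0) →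
        (∀ i, (B * K0) i i = 1) ∧
          ∀ i j : Fin n, i ≠ j → ¬ (∃ t < l + 1, R t i j) → (B * K0) i j = 0 := by
      rintro B K0 hK0 ⟨hB1, hB2⟩
      constructor
      · intro i
        rw [Matrix.mul_apply, Fintype.sum_eq_single i]
        · rw [hB1 i, hK0.1 i, one_mul]
        · intro p hpi
          by_cases hB : B i p = 0
          · rw [hB, zero_mul]
          · have hip : i ≠ p := fun h => hpi h.symm
            have hex : ∃ t < l, R (t+1) i p := by
              by_contra hx; exact hB (hB2 i p hip hx)
            obtain ⟨s, -, hRip⟩ := hex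
            rw [hK0.2 p i hpi (fun h0 => hasym _ _ _ _ hRip h0), mul_zero]
      · intro i j hij hnex
        rw [Matrix.mul_apply]
        apply Finset.sum_eq_zero
        intro p _
        by_cases hpj : p = j
        · subst hpj
          have hBij : B i p = 0 := by
            apply hB2 i p hij
            rintro ⟨t, ht, hR⟩
            exact hnex ⟨t+1, by omega, hR⟩
          rw [hBij, zero_mul]
        · by_cases hK0pj : K0 p j = 0
          · rw [hK0pj, mul_zero]
          · have hRpj : R 0 p j := by
              by_contra h; exact hK0pj (hK0.2 p j hpj h)
            by_cases hpi : p = i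
            · subst hpi
              exact absurd (⟨0, by omega, hRpj⟩ : ∃ t < l + 1, R t p j) hnex
            · by_cases hB : B i p = 0
              · rw [hB, zero_mul]
              · have hex : ∃ t < l, R (t+1) i p := by
                  by_contra hx; exact hB (hB2 i p (fun h => hpi h.symm) hx)
                obtain ⟨s, hs, hRip⟩ := hex
                obtain ⟨r, hr, hl1, hl2⟩ := hcne (s+1) 0 i p j hRip hRpj (by omega)
                exact absurd (⟨r, by omega, hr⟩ : ∃ t < l + 1, R t i j) hnex
    -- key entries: product determines the factor at direction 0
    have keyE : ∀ (B K0 : Matrix (Fin n) (Fin n) ℂ), StoR (R 0) K0 →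
        ((∀ i, B i i = 1) ∧ ∀ i j : Fin n, i ≠ j → ¬ (∃ t < l, R (t+1) i j) → B i j = 0) →
        ∀ i j, R 0 i j → (B * K0) i j = K0 i j := by
      rintro B K0 hK0 ⟨hB1, hB2⟩ i j hR
      rw [Matrix.mul_apply, Fintype.sum_eq_single i]
      · rw [hB1 i, one_mul]
      · intro p hpi
        by_cases hB : B i p = 0
        · rw [hB, zero_mul]
        · have hip : i ≠ p := fun h => hpi h.symm
          have hex : ∃ t < l, R (t+1) i p := by
            by_contra hx; exact hB (hB2 i p hip hx)
          obtain ⟨s, hs, hRip⟩ := hex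
          by_cases hpj : p = j
          · subst hpj
            exact absurd (hdisj _ _ _ _ hRip hR) (by omega)
          · by_cases hK0pj : K0 p j = 0
            · rw [hK0pj, mul_zero]
            · have hRpj : R 0 p j := by
                by_contra h; exact hK0pj (hK0.2 p j hpj h)
              obtain ⟨r, hr, hl1, hl2⟩ := hcne (s+1) 0 i p j hRip hRpj (by omega)
              exact absurd (hdisj _ _ _ _ hr hR) (by omega)
    constructor
    · -- injectivity
      intro K K' hK hK' hprod
      have hKs : ∀ t : Fin l, StoR (R (↑t + 1)) (K t.succ) := by
        intro t
        have h := hK t.succ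
        rwa [Fin.val_succ] at h
      have hKs' : ∀ t : Fin l, StoR (R (↑t + 1)) (K' t.succ) := by
        intro t
        have h := hK' t.succ
        rwa [Fin.val_succ] at h
      have hBcond := (ihim ((List.ofFn (fun t : Fin l => K t.succ)).reverse.prod)).mp
        ⟨fun t : Fin l => K t.succ, hKs, rfl⟩
      have hB'cond := (ihim ((List.ofFn (fun t : Fin l => K' t.succ)).reverse.prod)).mp
        ⟨fun t : Fin l => K' t.succ, hKs', rfl⟩
      rw [prod_ofFn_succ_rev K, prod_ofFn_succ_rev K'] at hprod
      have hK0mem : StoR (R 0) (K 0) := by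
        have h := hK 0
        rwa [Fin.val_zero] at h
      have hK0mem' : StoR (R 0) (K' 0) := by
        have h := hK' 0
        rwa [Fin.val_zero] at h
      have hK00 : K 0 = K' 0 := by
        ext i j
        by_cases hij : i = j
        · subst hij; rw [hK0mem.1, hK0mem'.1]
        · by_cases hR0 : R 0 i j
          · have e1 := keyE _ (K 0) hK0mem hBcond i j hR0
            have e2 := keyE _ (K' 0) hK0mem' hB'cond i j hR0
            rw [← e1, ← e2, hprod]
          · rw [hK0mem.2 i j hij hR0, hK0mem'.2 i j hij hR0]
      obtain ⟨K0inv, -, hr1, hr2⟩ := stoR_inv (R 0) hirr0 htr0 (K 0) hK0mem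
      have hBB' : (List.ofFn (fun t : Fin l => K t.succ)).reverse.prod
          = (List.ofFn (fun t : Fin l => K' t.succ)).reverse.prod := by
        calc (List.ofFn (fun t : Fin l => K t.succ)).reverse.prod
            = (List.ofFn (fun t : Fin l => K t.succ)).reverse.prod * (K 0 * K0inv) := by
              rw [hr1, mul_one]
          _ = ((List.ofFn (fun t : Fin l => K t.succ)).reverse.prod * K 0) * K0inv := by
              rw [mul_assoc]
          _ = ((List.ofFn (fun t : Fin l => K' t.succ)).reverse.prod * K' 0) * K0inv := by
              rw [hprod]
          _ = (List.ofFn (fun t : Fin l => K' t.succ)).reverse.prod * (K 0 * K0inv) := by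
              rw [← hK00, mul_assoc]
          _ = (List.ofFn (fun t : Fin l => K' t.succ)).reverse.prod := by rw [hr1, mul_one]
      have htail := ihinj (fun t : Fin l => K t.succ) (fun t : Fin l => K' t.succ) hKs hKs' hBB'
      funext t
      refine Fin.cases ?_ ?_ t
      · exact hK00
      · intro s
        exact congrFun htail s
    · -- image
      intro A
      constructor
      · rintro ⟨K, hK, rfl⟩
        have hKs : ∀ t : Fin l, StoR (R (↑t + 1)) (K t.succ) := by
          intro t
          have h := hK t.succ
          rwa [Fin.val_succ] at h
        have hBcond := (ihim ((List.ofFn (fun t : Fin l => K t.succ)).reverse.prod)).mp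
          ⟨fun t : Fin l => K t.succ, hKs, rfl⟩
        have hK0mem : StoR (R 0) (K 0) := by
          have h := hK 0
          rwa [Fin.val_zero] at h
        rw [prod_ofFn_succ_rev K]
        exact fwd _ (K 0) hK0mem hBcond
      · rintro ⟨h1, h2⟩
        set K0 : Matrix (Fin n) (Fin n) ℂ :=
          fun i j => if i = j then 1 else if R 0 i j then A i j else 0 with hK0def
        have hK0 : StoR (R 0) K0 := by
          constructor
          · intro i; simp [hK0def]
          · intro i j hij hR; simp [hK0def, hij, hR]
        obtain ⟨K0inv, hKinv, hr1, hr2⟩ := stoR_inv (R 0) hirr0 htr0 K0 hK0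
        have hK0entry : ∀ i j, R 0 i j → K0 i j = A i j := by
          intro i j h
          simp [hK0def, hne 0 i j h, h]
        have hBK0 : (A * K0inv) * K0 = A := by rw [mul_assoc, hr2, mul_one]
        have hBcond : (∀ i, (A * K0inv) i i = 1) ∧
            (∀ i j : Fin n, i ≠ j → ¬ (∃ t < l, R (t+1) i j) → (A * K0inv) i j = 0) := by
          constructor
          · intro i
            rw [Matrix.mul_apply, Fintype.sum_eq_single i]
            · rw [h1 i, hKinv.1 i, one_mul]
            · intro p hpi
              by_cases hKp : K0inv p i = 0
              · rw [hKp, mul_zero]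
              · have hRpi : R 0 p i := by
                  by_contra h; exact hKp (hKinv.2 p i hpi h)
                have hAip : A i p = 0 := by
                  apply h2 i p (fun h => hpi h.symm)
                  rintro ⟨s, -, hRip⟩
                  exact hasym _ _ _ _ hRip hRpi
                rw [hAip, zero_mul]
          · intro i j hij hnex
            by_cases hR0 : R 0 i j
            · have heq : (A * K0inv) i j = (K0 * K0inv) i j := by
                rw [Matrix.mul_apply, Matrix.mul_apply]
                apply Finset.sum_congr rfl
                intro p _
                by_cases hKp : K0inv p j = 0
                · rw [hKp, mul_zero, mul_zero]
                · congr 1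
                  have hpj : p = j ∨ R 0 p j := by
                    by_cases h : p = j
                    · exact Or.inl h
                    · exact Or.inr (by by_contra h'; exact hKp (hKinv.2 p j h h'))
                  by_cases hpi : p = i
                  · subst hpi
                    rw [h1 p, hK0.1 p]
                  · by_cases hRip : R 0 i p
                    · rw [hK0entry i p hRip]
                    · rw [hK0.2 i p (fun h => hpi h.symm) hRip]
                      apply h2 i p (fun h => hpi h.symm)
                      rintro ⟨s, hs, hRsip⟩
                      rcases hpj with rfl | hRpj
                      · exact hRip hR0
                      · match s, hRsip with
                        | 0, hRsip => exact hRip hRsip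
                        | s'+1, hRsip =>
                          obtain ⟨r, hr, hlo, hhi⟩ := hcne (s'+1) 0 i p j hRsip hRpj (by omega)
                          have hge1 : 1 ≤ r := by omega
                          refine hnex ⟨r - 1, by omega, ?_⟩
                          rwa [show r - 1 + 1 = r by omega]
              rw [heq, hr1, Matrix.one_apply_ne hij]
            · rw [Matrix.mul_apply]
              apply Finset.sum_eq_zero
              intro p _
              by_cases hKp : K0inv p j = 0
              · rw [hKp, mul_zero]
              · by_cases hpj : p = j
                · subst hpj
                  have hAij : A i p = 0 := by
                    apply h2 i p hij
                    rintro ⟨s, hs, hRsij⟩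
                    match s, hRsij with
                    | 0, hRsij => exact hR0 hRsij
                    | s'+1, hRsij => exact hnex ⟨s', by omega, hRsij⟩
                  rw [hAij, zero_mul]
                · have hRpj : R 0 p j := by
                    by_contra h; exact hKp (hKinv.2 p j hpj h)
                  by_cases hpi : p = i
                  · subst hpi
                    exact absurd (hKinv.2 p j hij hR0) hKp
                  · have hAip : A i p = 0 := by
                      apply h2 i p (fun h => hpi h.symm)
                      rintro ⟨s, hs, hRsip⟩
                      match s, hRsip with
                      | 0, hRsip => exact hR0 (hceq 0 i p j hRsip hRpj)
                      | s'+1, hRsip =>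
                        obtain ⟨r, hr, hlo, hhi⟩ := hcne (s'+1) 0 i p j hRsip hRpj (by omega)
                        have hge1 : 1 ≤ r := by omega
                        refine hnex ⟨r - 1, by omega, ?_⟩
                        rwa [show r - 1 + 1 = r by omega]
                    rw [hAip, zero_mul]
        obtain ⟨K', hK', hB'⟩ := (ihim (A * K0inv)).mpr hBcond
        refine ⟨Fin.cons K0 K', ?_, ?_⟩
        · intro t
          refine Fin.cases ?_ ?_ t
          · rw [Fin.cons_zero, Fin.val_zero]
            exact hK0
          · intro s
            rw [Fin.cons_succ, Fin.val_succ]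
            exact hK' s
        · rw [prod_ofFn_succ_rev]
          simp only [Fin.cons_succ, Fin.cons_zero]
          rw [hB', hBK0]


lemma isRoot_solved {n : ℕ} (u : Fin n → ℂ) (k : ℕ) (i j : Fin n) (θ : ℝ) :
    IsRoot u k i j θ ↔ ∃ r : ℝ, r < 0 ∧ u i - u j = (r : ℂ) * ce (((k : ℝ) - 1) * θ) := by
  have hcast : Complex.exp (-(Complex.I * ((k : ℂ) - 1) * (θ : ℂ)))
      = ce (-(((k : ℝ) - 1) * θ)) := by
    unfold ce; congr 1; push_cast; ring
  unfold IsRoot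
  rw [hcast]
  constructor
  · rintro ⟨r, hr, h⟩
    refine ⟨r, hr, ?_⟩
    have h2 := congrArg (· * ce (((k : ℝ) - 1) * θ)) h
    rw [mul_assoc, ce_mul_ce, show -(((k : ℝ) - 1) * θ) + ((k : ℝ) - 1) * θ = 0 by ring,
      ce_zero, mul_one] at h2
    exact h2
  · rintro ⟨r, hr, h⟩
    refine ⟨r, hr, ?_⟩
    rw [h, mul_assoc, ce_mul_ce, show ((k : ℝ) - 1) * θ + -(((k : ℝ) - 1) * θ) = 0 by ring,
      ce_zero, mul_one]

/-- **Unique factorisation into Stokes factors over a half-period.** Let `d₁ < ⋯ < d_l` be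
the anti-Stokes directions in the half-period `[θ₀, θ₀ + π/(k−1))`. Then the (reverse
ordered) product map `(K₁, …, K_l) ↦ K_l ⋯ K₁` on `Sto(d₁) × ⋯ × Sto(d_l)` is injective,
and its image is exactly the set of matrices `A` with `A_{ii} = 1` and `A_{ij} = 0`
whenever `i ≠ j` and not `i ≺ j`, where `i ≺ j` iff `(i,j) ∈ Roots(d_t)` for some `t` —
that is, `P·U₊·P⁻¹` for the permutation matrix `P` of the order `≺`. -/
theorem stokesFactors_product_halfPeriod (n k : ℕ) (hk : 2 ≤ k) (u : Fin n → ℂ)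
    (hu : Function.Injective u) (θ₀ : ℝ) (l : ℕ) (d : Fin l → ℝ) (hmono : StrictMono d)
    (hmem : ∀ t, d t ∈ Set.Ico θ₀ (θ₀ + Real.pi / ((k : ℝ) - 1)) ∧ IsAntiStokes u k (d t))
    (hall : ∀ θ ∈ Set.Ico θ₀ (θ₀ + Real.pi / ((k : ℝ) - 1)),
      IsAntiStokes u k θ → ∃ t, d t = θ) :
    (∀ K K' : Fin l → Matrix (Fin n) (Fin n) ℂ,
      (∀ t, StoMem u k (d t) (K t)) → (∀ t, StoMem u k (d t) (K' t)) →
      (List.ofFn K).reverse.prod = (List.ofFn K').reverse.prod → K = K') ∧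
    (∀ A : Matrix (Fin n) (Fin n) ℂ,
      (∃ K : Fin l → Matrix (Fin n) (Fin n) ℂ,
        (∀ t, StoMem u k (d t) (K t)) ∧ (List.ofFn K).reverse.prod = A) ↔
      ((∀ i, A i i = 1) ∧
        ∀ i j : Fin n, i ≠ j → ¬ (∃ t, IsRoot u k i j (d t)) → A i j = 0)) := by
  classical
  have hc : (0 : ℝ) < (k : ℝ) - 1 := by
    have : (2 : ℝ) ≤ (k : ℝ) := by exact_mod_cast hk
    linarith
  -- pairwise direction bound within the half-period
  have hbd : ∀ t s : Fin l, |((k : ℝ) - 1) * (d t - d s)| < Real.pi := by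
    intro t s
    obtain ⟨m11, m12⟩ := (hmem t).1
    obtain ⟨m21, m22⟩ := (hmem s).1
    rw [abs_mul, abs_of_pos hc]
    have habs : |d t - d s| < Real.pi / ((k : ℝ) - 1) := by
      rw [abs_lt]
      constructor <;> linarith
    calc ((k : ℝ) - 1) * |d t - d s| < ((k : ℝ) - 1) * (Real.pi / ((k : ℝ) - 1)) :=
          mul_lt_mul_of_pos_left habs hc
      _ = Real.pi := by field_simp
  -- half-period gap bound
  have hgap : ∀ t s : Fin l, d t - d s < Real.pi / ((k : ℝ) - 1) := by
    intro t s
    obtain ⟨m11, m12⟩ := (hmem t).1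
    obtain ⟨m21, m22⟩ := (hmem s).1
    linarith
  -- the indexed family of root relations
  set R : ℕ → Fin n → Fin n → Prop :=
    fun t i j => ∃ t' : Fin l, (t' : ℕ) = t ∧ IsRoot u k i j (d t') with hRdef
  have hRt : ∀ (t : Fin l) (i j : Fin n), R ↑t i j ↔ IsRoot u k i j (d t) := by
    intro t i j
    constructor
    · rintro ⟨t', ht', h⟩
      have : t' = t := Fin.ext ht'
      rwa [this] at h
    · intro h
      exact ⟨t, rfl, h⟩
  have hdisj : ∀ t s i j, R t i j → R s i j → t = s := by
    rintro t s i j ⟨t', rfl, h1⟩ ⟨s', rfl, h2⟩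
    obtain ⟨r1, hr1, e1⟩ := (isRoot_solved u k i j (d t')).mp h1
    obtain ⟨r2, hr2, e2⟩ := (isRoot_solved u k i j (d s')).mp h2
    have := (root_core hc e1 e2 (ne_of_lt hr1) (hbd t' s')).1
    rw [hmono.injective this]
  have hasym : ∀ t s i j, R t i j → R s j i → False := by
    rintro t s i j ⟨t', rfl, h1⟩ ⟨s', rfl, h2⟩
    obtain ⟨r1, hr1, e1⟩ := (isRoot_solved u k i j (d t')).mp h1
    obtain ⟨r2, hr2, e2⟩ := (isRoot_solved u k j i (d s')).mp h2
    have e2' : u i - u j = ((-r2 : ℝ) : ℂ) * ce (((k : ℝ) - 1) * d s') := by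
      have hiz : u i - u j = -(u j - u i) := by ring
      rw [hiz, e2]
      push_cast
      ring
    have := (root_core hc e1 e2' (ne_of_lt hr1) (hbd t' s')).2
    linarith
  have hceq : ∀ t i j m, R t i j → R t j m → R t i m := by
    rintro t i j m ⟨t', rfl, h1⟩ ⟨s', hs', h2⟩
    have : s' = t' := Fin.ext hs'
    subst this
    obtain ⟨r1, hr1, e1⟩ := (isRoot_solved u k i j (d s')).mp h1
    obtain ⟨r2, hr2, e2⟩ := (isRoot_solved u k j m (d s')).mp h2
    refine ⟨s', rfl, (isRoot_solved u k i m (d s')).mpr ⟨r1 + r2, by linarith, ?_⟩⟩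
    have hiz : u i - u m = (u i - u j) + (u j - u m) := by ring
    rw [hiz, e1, e2]
    push_cast
    ring
  have hcne : ∀ t s i j m, R t i j → R s j m → t ≠ s →
      ∃ r, R r i m ∧ min t s < r ∧ r < max t s := by
    rintro t s i j m ⟨t', rfl, h1⟩ ⟨s', rfl, h2⟩ hts
    have hts' : t' ≠ s' := fun h => hts (congrArg Fin.val h)
    obtain ⟨r1, hr1, e1⟩ := (isRoot_solved u k i j (d t')).mp h1
    obtain ⟨r2, hr2, e2⟩ := (isRoot_solved u k j m (d s')).mp h2
    have hdne : d t' ≠ d s' := fun h => hts' (hmono.injective h)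
    have hsum : u i - u j + (u j - u m) = u i - u m := by ring
    rcases hdne.lt_or_gt with hlt | hlt
    · obtain ⟨ψ, hψ1, hψ2, ρ, hρ, hψeq⟩ := ivt_root hc hr1 hr2 e1 e2 hlt (hgap s' t')
      rw [hsum] at hψeq
      have hroot : IsRoot u k i m ψ := (isRoot_solved u k i m ψ).mpr ⟨ρ, hρ, hψeq⟩
      have hineq : i ≠ m := by
        intro h
        rw [h, sub_self] at hψeq
        exact (ne_of_lt hρ) (by
          have := mul_eq_zero.mp hψeq.symm
          rcases this with h' | h'
          · exact_mod_cast h'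
          · exact absurd h' (ce_ne_zero _))
      obtain ⟨m11, m12⟩ := (hmem t').1
      obtain ⟨m21, m22⟩ := (hmem s').1
      obtain ⟨r', hr'⟩ := hall ψ ⟨le_trans m11 hψ1.le, lt_trans hψ2 m22⟩ ⟨i, m, hineq, hroot⟩
      have v1 : (t' : ℕ) < (r' : ℕ) := hmono.lt_iff_lt.mp (by rw [hr']; exact hψ1)
      have v2 : (r' : ℕ) < (s' : ℕ) := hmono.lt_iff_lt.mp (by rw [hr']; exact hψ2)
      exact ⟨↑r', ⟨r', rfl, by rwa [hr']⟩, by omega, by omega⟩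
    · have hsum' : u j - u m + (u i - u j) = u i - u m := by ring
      obtain ⟨ψ, hψ1, hψ2, ρ, hρ, hψeq⟩ := ivt_root hc hr2 hr1 e2 e1 hlt (hgap t' s')
      rw [hsum'] at hψeq
      have hroot : IsRoot u k i m ψ := (isRoot_solved u k i m ψ).mpr ⟨ρ, hρ, hψeq⟩
      have hineq : i ≠ m := by
        intro h
        rw [h, sub_self] at hψeq
        exact (ne_of_lt hρ) (by
          have := mul_eq_zero.mp hψeq.symm
          rcases this with h' | h'
          · exact_mod_cast h'
          · exact absurd h' (ce_ne_zero _))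
      obtain ⟨m11, m12⟩ := (hmem t').1
      obtain ⟨m21, m22⟩ := (hmem s').1
      obtain ⟨r', hr'⟩ := hall ψ ⟨le_trans m21 hψ1.le, lt_trans hψ2 m12⟩ ⟨i, m, hineq, hroot⟩
      have v1 : (s' : ℕ) < (r' : ℕ) := hmono.lt_iff_lt.mp (by rw [hr']; exact hψ1)
      have v2 : (r' : ℕ) < (t' : ℕ) := hmono.lt_iff_lt.mp (by rw [hr']; exact hψ2)
      exact ⟨↑r', ⟨r', rfl, by rwa [hr']⟩, by omega, by omega⟩
  obtain ⟨hinj, him⟩ := bjl l R hdisj hasym hceq hcne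
  have hStoIff : ∀ (t : Fin l) (K : Matrix (Fin n) (Fin n) ℂ),
      StoMem u k (d t) K ↔ StoR (R ↑t) K := by
    intro t K
    unfold StoMem StoR
    constructor
    · rintro ⟨a, b⟩
      exact ⟨a, fun i j hij hn => b i j hij (fun h => hn ((hRt t i j).mpr h))⟩
    · rintro ⟨a, b⟩
      exact ⟨a, fun i j hij hn => b i j hij (fun h => hn ((hRt t i j).mp h))⟩
  constructor
  · intro K K' h h' hp
    exact hinj K K' (fun t => (hStoIff t (K t)).mp (h t))
      (fun t => (hStoIff t (K' t)).mp (h' t)) hp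
  · intro A
    constructor
    · rintro ⟨K, hK, hp⟩
      obtain ⟨c1, c2⟩ := (him A).mp ⟨K, fun t => (hStoIff t (K t)).mp (hK t), hp⟩
      refine ⟨c1, fun i j hij hn => c2 i j hij ?_⟩
      rintro ⟨t, ht, t', rfl, hR⟩
      exact hn ⟨t', hR⟩
    · rintro ⟨c1, c2⟩
      obtain ⟨K, hK, hp⟩ := (him A).mpr ⟨c1, fun i j hij hn => c2 i j hij (by
        rintro ⟨t', hR⟩
        exact hn ⟨↑t', t'.isLt, t', rfl, hR⟩)⟩
      exact ⟨K, fun t => (hStoIff t (K t)).mpr (hK t), hp⟩
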